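/- arXiv:2106.06006 — 2 statements merged into one kernel-verified Lean document; each statement's English description precedes it below -/
import Mathlib

section
/- In the free group F(b, β) of rank 2, for any n ≥ 1 the n+3 elements b², bβb⁻¹, β⁻ⁱbβⁱ for 1 ≤ i ≤ n, and β^{-(n+1)} b β^{(n+1)} form a basis of a free subgroup: the subgroup they generate is free of rank n+3 with these elements as free generators (equivalently, the homomorphism from a free group of rank n+3 sending the generators to these elements is injective). -/
/-- The family of `n+3` elements of the free group `F(b, β) = FreeGroup (Fin 2)`
(with `b = FreeGroup.of 0` and `β = FreeGroup.of 1`): `b²`, `bβb⁻¹`,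
`β⁻ⁱbβⁱ` for `1 ≤ i ≤ n` (indexed by `Sum.inl i` with zero-based `i`, so with
exponent `i+1`), and `β^{-(n+1)} b β^{n+1}`. -/
def basisFamily (n : ℕ) : Fin n ⊕ Fin 3 → FreeGroup (Fin 2) :=
  let b : FreeGroup (Fin 2) := FreeGroup.of 0
  let be : FreeGroup (Fin 2) := FreeGroup.of 1
  fun j => match j with
  | Sum.inl i => be ^ (-((i : ℕ) + 1 : ℤ)) * b * be ^ ((i : ℕ) + 1)
  | Sum.inr t =>
      if t = 0 then b ^ 2
      else if t = 1 then b * be * b⁻¹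
      else be ^ (-((n : ℤ) + 1)) * b * be ^ (n + 1)

open Pointwise

namespace BasisFamilyAux

abbrev F2 := FreeGroup (Fin 2)

/-- The generator `b`. -/
def B : F2 := FreeGroup.of 0
/-- The generator `β`. -/
def E : F2 := FreeGroup.of 1

/-- The set of elements whose reduced word starts with the letter `(x, s)`. -/
def P (x : Fin 2) (s : Bool) : Set F2 := {g | g.toWord.head? = some (x, s)}

lemma mem_P {x : Fin 2} {s : Bool} {g : F2} :
    g ∈ P x s ↔ g.toWord.head? = some (x, s) := Iff.rfl

lemma P_ne {x x' : Fin 2} {s s' : Bool} {g : F2} (hg : g ∈ P x s)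
    (h : ¬(x = x' ∧ s = s')) : g ∉ P x' s' := by
  intro hg'
  rw [mem_P] at hg hg'
  rw [hg] at hg'
  simp only [Option.some.injEq, Prod.mk.injEq] at hg'
  exact h hg'

lemma head_cons (x : Fin 2) (s : Bool) (g : F2)
    (h : g.toWord.head? ≠ some (x, !s)) :
    (FreeGroup.mk [(x, s)] * g).toWord = (x, s) :: g.toWord := by
  conv_lhs => rw [← FreeGroup.mk_toWord (x := g)]
  rw [FreeGroup.mul_mk, FreeGroup.toWord_mk, List.singleton_append,
    FreeGroup.reduce.cons, FreeGroup.reduce_toWord]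
  cases hw : g.toWord with
  | nil => rfl
  | cons hd tl =>
    obtain ⟨y, t⟩ := hd
    simp only []
    rw [if_neg]
    rintro ⟨h1, h2⟩
    apply h
    rw [hw]
    simp only [List.head?_cons, Option.some.injEq, Prod.mk.injEq]
    refine ⟨h1.symm, ?_⟩
    rw [h2]
    exact (Bool.not_not t).symm

lemma mul_mem_P (x : Fin 2) (s : Bool) {g : F2} (h : g ∉ P x (!s)) :
    FreeGroup.mk [(x, s)] * g ∈ P x s := by
  rw [mem_P, head_cons x s g (by simpa [mem_P] using h)]
  simp

lemma inv_of (x : Fin 2) : (FreeGroup.of x : F2)⁻¹ = FreeGroup.mk [(x, false)] := by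
  rw [show (FreeGroup.of x : F2) = FreeGroup.mk [(x, true)] from rfl, FreeGroup.inv_mk]
  simp [FreeGroup.invRev]

lemma B_mul {g : F2} (h : g ∉ P 0 false) : B * g ∈ P 0 true :=
  mul_mem_P 0 true (by simpa using h)

lemma Binv_mul {g : F2} (h : g ∉ P 0 true) : B⁻¹ * g ∈ P 0 false := by
  rw [show B⁻¹ = FreeGroup.mk [((0 : Fin 2), false)] from inv_of 0]
  exact mul_mem_P 0 false (by simpa using h)

lemma E_mul {g : F2} (h : g ∉ P 1 false) : E * g ∈ P 1 true :=
  mul_mem_P 1 true (by simpa using h)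

lemma Einv_mul {g : F2} (h : g ∉ P 1 true) : E⁻¹ * g ∈ P 1 false := by
  rw [show E⁻¹ = FreeGroup.mk [((1 : Fin 2), false)] from inv_of 1]
  exact mul_mem_P 1 false (by simpa using h)

lemma Epow_mul : ∀ k : ℕ, 1 ≤ k → ∀ {g : F2}, g ∉ P 1 false → E ^ k * g ∈ P 1 true := by
  intro k
  induction k with
  | zero => omega
  | succ k ih =>
    intro _ g hg
    rcases Nat.eq_zero_or_pos k with rfl | hk
    · rw [pow_one]; exact E_mul hg
    · have h1 : E ^ k * g ∈ P 1 true := ih hk hg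
      have h2 : E ^ (k + 1) * g = E * (E ^ k * g) := by group
      rw [h2]
      exact E_mul (P_ne h1 (by simp))

lemma Einvpow_mul : ∀ k : ℕ, 1 ≤ k → ∀ {g : F2}, g ∉ P 1 true → (E ^ k)⁻¹ * g ∈ P 1 false := by
  intro k
  induction k with
  | zero => omega
  | succ k ih =>
    intro _ g hg
    rcases Nat.eq_zero_or_pos k with rfl | hk
    · rw [pow_one]; exact Einv_mul hg
    · have h1 : (E ^ k)⁻¹ * g ∈ P 1 false := ih hk hg
      have h2 : (E ^ (k + 1))⁻¹ * g = E⁻¹ * ((E ^ k)⁻¹ * g) := by group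
      rw [h2]
      exact Einv_mul (P_ne h1 (by simp))

/-- The translating elements. -/
def W : ℕ → F2
  | 0 => 1
  | 1 => B
  | (m + 2) => (E ^ (m + 1))⁻¹

@[simp] lemma W_zero : W 0 = 1 := rfl
@[simp] lemma W_one : W 1 = B := rfl
@[simp] lemma W_add_two (m : ℕ) : W (m + 2) = (E ^ (m + 1))⁻¹ := rfl

/-- Compatibility of a head `(x, s)` with a translate `W m`. -/
def Ok (m : ℕ) (x : Fin 2) (s : Bool) : Prop :=
  (m = 0 → x = 0 ∧ s = false) ∧ (m = 1 → ¬(x = 0 ∧ s = false)) ∧ (2 ≤ m → x = 0)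

lemma helper_le (a : F2) {p q : ℕ} (h : p ≤ q) : a ^ p * (a ^ q)⁻¹ = (a ^ (q - p))⁻¹ := by
  obtain ⟨r, rfl⟩ := Nat.exists_eq_add_of_le h
  rw [Nat.add_sub_cancel_left, add_comm, pow_add, mul_inv_rev, mul_inv_cancel_left]

lemma helper_ge (a : F2) {p q : ℕ} (h : q ≤ p) : a ^ p * (a ^ q)⁻¹ = a ^ (p - q) := by
  obtain ⟨r, rfl⟩ := Nat.exists_eq_add_of_le h
  rw [Nat.add_sub_cancel_left, add_comm, pow_add, mul_inv_cancel_right]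

/-- The master disjointness lemma. -/
lemma master {m1 m2 : ℕ} {x1 x2 : Fin 2} {s1 s2 : Bool}
    (h1 : Ok m1 x1 s1) (h2 : Ok m2 x2 s2)
    (hne : (m1, x1, s1) ≠ (m2, x2, s2)) :
    Disjoint (W m1 • P x1 s1) (W m2 • P x2 s2) := by
  rw [Set.disjoint_left]
  rintro u hu1 hu2
  obtain ⟨g, hg, rfl⟩ := hu1
  obtain ⟨g', hg', heq⟩ := hu2
  have key : g' = (W m2)⁻¹ * (W m1 * g) := by
    have h' : W m2 * g' = W m1 * g := heq
    rw [← h', inv_mul_cancel_left]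
  rw [key] at hg'
  clear key heq
  obtain _ | _ | m1 := m1 <;> obtain _ | _ | m2 := m2
  -- (0,0)
  · obtain ⟨hx1, hs1⟩ := h1.1 rfl
    obtain ⟨hx2, hs2⟩ := h2.1 rfl
    exact hne (by simp [hx1, hs1, hx2, hs2])
  -- (0,1)
  · obtain ⟨hx1, hs1⟩ := h1.1 rfl
    subst hx1; subst hs1
    have e : (W 1)⁻¹ * (W 0 * g) = B⁻¹ * g := by simp
    rw [e] at hg'
    have : B⁻¹ * g ∈ P 0 false := Binv_mul (P_ne hg (by simp))
    exact P_ne this (fun hp => h2.2.1 rfl ⟨hp.1.symm, hp.2.symm⟩) hg'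
  -- (0,m2+2)
  · obtain ⟨hx1, hs1⟩ := h1.1 rfl
    subst hx1; subst hs1
    have e : (W (m2 + 2))⁻¹ * (W 0 * g) = E ^ (m2 + 1) * g := by simp
    rw [e] at hg'
    have : E ^ (m2 + 1) * g ∈ P 1 true := Epow_mul _ (by omega) (P_ne hg (by simp))
    have hx2 : x2 = 0 := h2.2.2 (by omega)
    subst hx2
    exact P_ne this (by simp) hg'
  -- (1,0)
  · obtain ⟨hx2, hs2⟩ := h2.1 rfl
    subst hx2; subst hs2
    have e : (W 0)⁻¹ * (W 1 * g) = B * g := by simp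
    rw [e] at hg'
    have : B * g ∈ P 0 true := B_mul (P_ne hg (fun hp => h1.2.1 rfl ⟨hp.1, hp.2⟩))
    exact P_ne this (by simp) hg'
  -- (1,1)
  · have e : (W 1)⁻¹ * (W 1 * g) = g := by simp
    rw [e] at hg'
    refine P_ne hg (fun hp => hne ?_) hg'
    simp [hp.1, hp.2]
  -- (1,m2+2)
  · have e : (W (m2 + 2))⁻¹ * (W 1 * g) = E ^ (m2 + 1) * (B * g) := by
      simp [mul_assoc]
    rw [e] at hg'
    have hb : B * g ∈ P 0 true := B_mul (P_ne hg (fun hp => h1.2.1 rfl ⟨hp.1, hp.2⟩))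
    have : E ^ (m2 + 1) * (B * g) ∈ P 1 true := Epow_mul _ (by omega) (P_ne hb (by simp))
    have hx2 : x2 = 0 := h2.2.2 (by omega)
    subst hx2
    exact P_ne this (by simp) hg'
  -- (m1+2,0)
  · obtain ⟨hx2, hs2⟩ := h2.1 rfl
    subst hx2; subst hs2
    have hx1 : x1 = 0 := h1.2.2 (by omega)
    subst hx1
    have e : (W 0)⁻¹ * (W (m1 + 2) * g) = (E ^ (m1 + 1))⁻¹ * g := by simp
    rw [e] at hg'
    have : (E ^ (m1 + 1))⁻¹ * g ∈ P 1 false := Einvpow_mul _ (by omega) (P_ne hg (by simp))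
    exact P_ne this (by simp) hg'
  -- (m1+2,1)
  · have hx1 : x1 = 0 := h1.2.2 (by omega)
    subst hx1
    have e : (W 1)⁻¹ * (W (m1 + 2) * g) = B⁻¹ * ((E ^ (m1 + 1))⁻¹ * g) := by
      simp [mul_assoc]
    rw [e] at hg'
    have hb : (E ^ (m1 + 1))⁻¹ * g ∈ P 1 false := Einvpow_mul _ (by omega) (P_ne hg (by simp))
    have : B⁻¹ * ((E ^ (m1 + 1))⁻¹ * g) ∈ P 0 false := Binv_mul (P_ne hb (by simp))
    exact P_ne this (fun hp => h2.2.1 rfl ⟨hp.1.symm, hp.2.symm⟩) hg'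
  -- (m1+2,m2+2)
  · have hx1 : x1 = 0 := h1.2.2 (by omega)
    have hx2 : x2 = 0 := h2.2.2 (by omega)
    subst hx1; subst hx2
    rcases lt_trichotomy m1 m2 with hlt | heq2 | hgt
    · have e : (W (m2 + 2))⁻¹ * (W (m1 + 2) * g) = E ^ (m2 - m1) * g := by
        have h3 : (E ^ (m2 + 1)) * (E ^ (m1 + 1))⁻¹ = E ^ (m2 - m1) := by
          rw [helper_ge E (by omega)]
          congr 1
          omega
        simp only [W_add_two, inv_inv, ← mul_assoc, h3]
      rw [e] at hg'
      have : E ^ (m2 - m1) * g ∈ P 1 true := Epow_mul _ (by omega) (P_ne hg (by simp))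
      exact P_ne this (by simp) hg'
    · subst heq2
      have e : (W (m1 + 2))⁻¹ * (W (m1 + 2) * g) = g := by simp
      rw [e] at hg'
      refine P_ne hg (fun hp => hne ?_) hg'
      simp [hp.2]
    · have e : (W (m2 + 2))⁻¹ * (W (m1 + 2) * g) = (E ^ (m1 - m2))⁻¹ * g := by
        have h3 : (E ^ (m2 + 1)) * (E ^ (m1 + 1))⁻¹ = (E ^ (m1 - m2))⁻¹ := by
          rw [helper_le E (by omega)]
          congr 2
          omega
        simp only [W_add_two, inv_inv, ← mul_assoc, h3]
      rw [e] at hg'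
      have : (E ^ (m1 - m2))⁻¹ * g ∈ P 1 false := Einvpow_mul _ (by omega) (P_ne hg (by simp))
      exact P_ne this (by simp) hg'

end BasisFamilyAux

namespace BasisFamilyAux

lemma bf_inl (n : ℕ) (i : Fin n) :
    basisFamily n (Sum.inl i) = (E ^ ((i : ℕ) + 1))⁻¹ * B * E ^ ((i : ℕ) + 1) := by
  show E ^ (-((i : ℕ) + 1 : ℤ)) * B * E ^ ((i : ℕ) + 1) = _
  rw [show (-((i : ℕ) + 1 : ℤ)) = -(((i : ℕ) + 1 : ℕ) : ℤ) by push_cast; ring,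
    zpow_neg, zpow_natCast]

lemma bf_inr0 (n : ℕ) : basisFamily n (Sum.inr 0) = B ^ 2 := rfl

lemma bf_inr1 (n : ℕ) : basisFamily n (Sum.inr 1) = B * E * B⁻¹ := rfl

lemma bf_inr2 (n : ℕ) :
    basisFamily n (Sum.inr 2) = (E ^ (n + 1))⁻¹ * B * E ^ (n + 1) := by
  show E ^ (-((n : ℤ) + 1)) * B * E ^ (n + 1) = _
  rw [show (-((n : ℤ) + 1)) = -(((n : ℕ) + 1 : ℕ) : ℤ) by push_cast; ring,
    zpow_neg, zpow_natCast]

/-- Parameters for the `X` ping-pong sets. -/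
def pX (n : ℕ) : Fin n ⊕ Fin 3 → ℕ × Fin 2
  | Sum.inl i => ((i : ℕ) + 2, 0)
  | Sum.inr t => if t = 0 then (1, 0) else if t = 1 then (1, 1) else (n + 2, 0)

/-- Parameters for the `Y` ping-pong sets. -/
def pY (n : ℕ) : Fin n ⊕ Fin 3 → ℕ × Fin 2
  | Sum.inl i => ((i : ℕ) + 2, 0)
  | Sum.inr t => if t = 0 then (0, 0) else if t = 1 then (1, 1) else (n + 2, 0)

def XX (n : ℕ) (j : Fin n ⊕ Fin 3) : Set F2 := W (pX n j).1 • P (pX n j).2 true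

def YY (n : ℕ) (j : Fin n ⊕ Fin 3) : Set F2 := W (pY n j).1 • P (pY n j).2 false

lemma okX (n : ℕ) (j : Fin n ⊕ Fin 3) : Ok (pX n j).1 (pX n j).2 true := by
  rcases j with i | t
  · exact ⟨by simp [pX], by simp [pX], by simp [pX]⟩
  · fin_cases t <;> simp [pX, Ok]

lemma okY (n : ℕ) (j : Fin n ⊕ Fin 3) : Ok (pY n j).1 (pY n j).2 false := by
  rcases j with i | t
  · exact ⟨by simp [pY], by simp [pY], by simp [pY]⟩
  · fin_cases t <;> simp [pY, Ok]

lemma pX_ne (n : ℕ) {j j' : Fin n ⊕ Fin 3} (h : j ≠ j') : pX n j ≠ pX n j' := by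
  rcases j with i | t <;> rcases j' with i' | t'
  · have hii : (i : ℕ) ≠ (i' : ℕ) := fun hv => h (by rw [Fin.ext hv])
    simp [pX, Prod.ext_iff]
    omega
  · have := i.isLt
    fin_cases t' <;> simp [pX, Prod.ext_iff] <;> omega
  · have := i'.isLt
    fin_cases t <;> simp [pX, Prod.ext_iff] <;> omega
  · fin_cases t <;> fin_cases t' <;> simp_all [pX, Prod.ext_iff] <;> omega
 
lemma pY_ne (n : ℕ) {j j' : Fin n ⊕ Fin 3} (h : j ≠ j') : pY n j ≠ pY n j' := by
  rcases j with i | t <;> rcases j' with i' | t'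
  · have hii : (i : ℕ) ≠ (i' : ℕ) := fun hv => h (by rw [Fin.ext hv])
    simp [pY, Prod.ext_iff]
    omega
  · have := i.isLt
    fin_cases t' <;> simp [pY, Prod.ext_iff] <;> omega
  · have := i'.isLt
    fin_cases t <;> simp [pY, Prod.ext_iff] <;> omega
  · fin_cases t <;> fin_cases t' <;> simp_all [pY, Prod.ext_iff] <;> omega

end BasisFamilyAux

open BasisFamilyAux in
/-- In the free group `F(b, β)` of rank 2, for any `n ≥ 1` the
`n+3` elements `b²`, `bβb⁻¹`, `β⁻ⁱbβⁱ` for `1 ≤ i ≤ n`, and `β^{-(n+1)} b β^{n+1}`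
form a basis of a free subgroup: the homomorphism from the free group of rank `n+3`
sending the generators to these elements is injective. -/
theorem basisFamily_injective (n : ℕ) (hn : 1 ≤ n) :
    Function.Injective (FreeGroup.lift (basisFamily n) :
      FreeGroup (Fin n ⊕ Fin 3) →* FreeGroup (Fin 2)) := by
  haveI : Nontrivial (Fin n ⊕ Fin 3) :=
    ⟨⟨Sum.inr 0, Sum.inr 1, by simp⟩⟩
  apply FreeGroup.injective_lift_of_ping_pong (basisFamily n) (XX n) (YY n)
  · -- nonempty
    intro j
    refine Set.Nonempty.smul_set ⟨FreeGroup.of (pX n j).2, ?_⟩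
    rw [mem_P, FreeGroup.toWord_of]
    rfl
  · -- X pairwise disjoint
    intro j j' hjj'
    refine master (okX n j) (okX n j') ?_
    have := pX_ne n hjj'
    intro hc
    apply this
    have h1 := congrArg Prod.fst hc
    have h2 := congrArg (fun p => p.2.1) hc
    exact Prod.ext h1 h2
  · -- Y pairwise disjoint
    intro j j' hjj'
    refine master (okY n j) (okY n j') ?_
    have := pY_ne n hjj'
    intro hc
    apply this
    have h1 := congrArg Prod.fst hc
    have h2 := congrArg (fun p => p.2.1) hc
    exact Prod.ext h1 h2
  · -- X vs Y disjoint
    intro j j'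
    refine master (okX n j) (okY n j') ?_
    intro hc
    have h3 := congrArg (fun p => p.2.2) hc
    simp at h3
  · -- the ping: a j • (Y j)ᶜ ⊆ X j
    intro j v hv
    obtain ⟨u, hu, rfl⟩ := hv
    rcases j with i | t
    · set k : ℕ := (i : ℕ) + 1 with hk
      have hu' : E ^ k * u ∉ P 0 false := by
        intro hmem
        exact hu ⟨E ^ k * u, hmem, by
          show (E ^ k)⁻¹ * (E ^ k * u) = u
          group⟩
      show basisFamily n (Sum.inl i) * u ∈ XX n (Sum.inl i)
      rw [bf_inl n i, ← hk]
      exact ⟨B * (E ^ k * u), B_mul hu', by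
        show (E ^ k)⁻¹ * (B * (E ^ k * u)) = (E ^ k)⁻¹ * B * E ^ k * u
        group⟩
    · fin_cases t
      · -- b² : X = B • P 0 true, Y = P 0 false
        have hu' : u ∉ P 0 false := by
          intro hmem
          exact hu ⟨u, hmem, one_mul u⟩
        show basisFamily n (Sum.inr 0) * u ∈ XX n (Sum.inr 0)
        rw [bf_inr0 n]
        exact ⟨B * u, B_mul hu', by
          show B * (B * u) = B ^ 2 * u
          rw [pow_two, mul_assoc]⟩
      · -- bβb⁻¹ : X = B • P 1 true, Y = B • P 1 false
        have hu' : B⁻¹ * u ∉ P 1 false := by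
          intro hmem
          exact hu ⟨B⁻¹ * u, hmem, by
            show B * (B⁻¹ * u) = u
            group⟩
        show basisFamily n (Sum.inr 1) * u ∈ XX n (Sum.inr 1)
        rw [bf_inr1 n]
        exact ⟨E * (B⁻¹ * u), E_mul hu', by
          show B * (E * (B⁻¹ * u)) = B * E * B⁻¹ * u
          group⟩
      · set k : ℕ := n + 1 with hk
        have hu' : E ^ k * u ∉ P 0 false := by
          intro hmem
          exact hu ⟨E ^ k * u, hmem, by
            show (E ^ k)⁻¹ * (E ^ k * u) = u
            group⟩
        show basisFamily n (Sum.inr 2) * u ∈ XX n (Sum.inr 2)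
        rw [bf_inr2 n, ← hk]
        exact ⟨B * (E ^ k * u), B_mul hu', by
          show (E ^ k)⁻¹ * (B * (E ^ k * u)) = (E ^ k)⁻¹ * B * E ^ k * u
          group⟩
  · -- the pong: a⁻¹ j • (X j)ᶜ ⊆ Y j
    intro j v hv
    obtain ⟨u, hu, rfl⟩ := hv
    rcases j with i | t
    · set k : ℕ := (i : ℕ) + 1 with hk
      have hu' : E ^ k * u ∉ P 0 true := by
        intro hmem
        exact hu ⟨E ^ k * u, hmem, by
          show (E ^ k)⁻¹ * (E ^ k * u) = u
          group⟩
      show (basisFamily n (Sum.inl i))⁻¹ * u ∈ YY n (Sum.inl i)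
      rw [bf_inl n i, ← hk]
      exact ⟨B⁻¹ * (E ^ k * u), Binv_mul hu', by
        show (E ^ k)⁻¹ * (B⁻¹ * (E ^ k * u)) = ((E ^ k)⁻¹ * B * E ^ k)⁻¹ * u
        group⟩
    · fin_cases t
      · have hu' : B⁻¹ * u ∉ P 0 true := by
          intro hmem
          exact hu ⟨B⁻¹ * u, hmem, by
            show B * (B⁻¹ * u) = u
            group⟩
        show (basisFamily n (Sum.inr 0))⁻¹ * u ∈ YY n (Sum.inr 0)
        rw [bf_inr0 n]
        exact ⟨B⁻¹ * (B⁻¹ * u), Binv_mul hu', by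
          show 1 * (B⁻¹ * (B⁻¹ * u)) = (B ^ 2)⁻¹ * u
          rw [pow_two, mul_inv_rev, one_mul, mul_assoc]⟩
      · have hu' : B⁻¹ * u ∉ P 1 true := by
          intro hmem
          exact hu ⟨B⁻¹ * u, hmem, by
            show B * (B⁻¹ * u) = u
            group⟩
        show (basisFamily n (Sum.inr 1))⁻¹ * u ∈ YY n (Sum.inr 1)
        rw [bf_inr1 n]
        exact ⟨E⁻¹ * (B⁻¹ * u), Einv_mul hu', by
          show B * (E⁻¹ * (B⁻¹ * u)) = (B * E * B⁻¹)⁻¹ * u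
          group⟩
      · set k : ℕ := n + 1 with hk
        have hu' : E ^ k * u ∉ P 0 true := by
          intro hmem
          exact hu ⟨E ^ k * u, hmem, by
            show (E ^ k)⁻¹ * (E ^ k * u) = u
            group⟩
        show (basisFamily n (Sum.inr 2))⁻¹ * u ∈ YY n (Sum.inr 2)
        rw [bf_inr2 n, ← hk]
        exact ⟨B⁻¹ * (E ^ k * u), Binv_mul hu', by
          show (E ^ k)⁻¹ * (B⁻¹ * (E ^ k * u)) = ((E ^ k)⁻¹ * B * E ^ k)⁻¹ * u
          group⟩
end

section
/- Let k ≥ 1 and let a : Fin k → ℕ be a vector of nonnegative integers with gcd(a₁,…,a_k) = 1. Then a can be transformed into the vector (1,0,…,0) by a finite sequence of moves, where each move either (a) chooses indices r ≠ s with a_s ≤ a_r and replaces a_r by a_r − a_s while leaving all other entries unchanged, or (b) permutes the entries of the vector. -/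
/-- Move (a): choose indices `r ≠ s` with `a s ≤ a r` and replace `a r` by
`a r - a s`, leaving all other entries unchanged. -/
def SubtractMove {k : ℕ} (a a' : Fin k → ℕ) : Prop :=
  ∃ r s : Fin k, r ≠ s ∧ a s ≤ a r ∧ a' = Function.update a r (a r - a s)

/-- Move (b): permute the entries of the vector. -/
def PermMove {k : ℕ} (a a' : Fin k → ℕ) : Prop :=
  ∃ σ : Equiv.Perm (Fin k), a' = a ∘ σ

lemma gcd_update_sub {k : ℕ} (a : Fin k → ℕ) (r s : Fin k) (hrs : r ≠ s)
    (hle : a s ≤ a r) :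
    Finset.univ.gcd (Function.update a r (a r - a s)) = Finset.univ.gcd a := by
  apply Nat.dvd_antisymm
  · apply Finset.dvd_gcd
    intro i _
    by_cases hi : i = r
    · subst hi
      have h1 : Finset.univ.gcd (Function.update a i (a i - a s)) ∣ a i - a s := by
        have := Finset.gcd_dvd (f := Function.update a i (a i - a s))
          (Finset.mem_univ i)
        simpa using this
      have h2 : Finset.univ.gcd (Function.update a i (a i - a s)) ∣ a s := by
        have := Finset.gcd_dvd (f := Function.update a i (a i - a s))
          (Finset.mem_univ s)
        simpa [Function.update_of_ne (Ne.symm hrs)] using this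
      have h3 := Nat.dvd_add h1 h2
      rwa [Nat.sub_add_cancel hle] at h3
    · have := Finset.gcd_dvd (f := Function.update a r (a r - a s))
        (Finset.mem_univ i)
      simpa [Function.update_of_ne hi] using this
  · apply Finset.dvd_gcd
    intro i _
    by_cases hi : i = r
    · subst hi
      rw [Function.update_self]
      exact Nat.dvd_sub (Finset.gcd_dvd (Finset.mem_univ i))
        (Finset.gcd_dvd (Finset.mem_univ s))
    · rw [Function.update_of_ne hi]
      exact Finset.gcd_dvd (Finset.mem_univ i)

lemma sum_update_sub_lt {k : ℕ} (a : Fin k → ℕ) (r s : Fin k) (hrs : r ≠ s)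
    (hle : a s ≤ a r) (hs : a s ≠ 0) :
    (∑ x, Function.update a r (a r - a s) x) < ∑ x, a x := by
  rw [Finset.sum_update_of_mem (Finset.mem_univ r)]
  rw [← Finset.add_sum_erase _ a (Finset.mem_univ r)]
  have : Finset.univ \ {r} = Finset.univ.erase r := by
    ext x; simp [Finset.mem_erase, and_comm]
  rw [this]
  have : a r - a s < a r := by omega
  omega

lemma aux_reach (k : ℕ) (hk : 1 ≤ k) : ∀ n (a : Fin k → ℕ),
    (∑ i, a i) = n → Finset.univ.gcd a = 1 →
    Relation.ReflTransGen (fun v v' => SubtractMove v v' ∨ PermMove v v') a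
      (fun j => if (j : ℕ) = 0 then 1 else 0) := by
  haveI : NeZero k := ⟨by omega⟩
  intro n
  induction n using Nat.strong_induction_on with
  | _ n ih =>
    intro a hsum hgcd
    by_cases htwo : ∃ i j : Fin k, i ≠ j ∧ a i ≠ 0 ∧ a j ≠ 0
    · obtain ⟨i, j, hij, hi, hj⟩ := htwo
      have key : ∀ r s : Fin k, r ≠ s → a r ≠ 0 → a s ≠ 0 → a s ≤ a r →
          Relation.ReflTransGen (fun v v' => SubtractMove v v' ∨ PermMove v v') a
            (fun l => if (l : ℕ) = 0 then 1 else 0) := by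
        intro r s hrs hr hs hle
        set b := Function.update a r (a r - a s) with hb
        have hsb : (∑ x, b x) < n := hsum ▸ sum_update_sub_lt a r s hrs hle hs
        have hgb : Finset.univ.gcd b = 1 := by
          rw [hb, gcd_update_sub a r s hrs hle]; exact hgcd
        refine Relation.ReflTransGen.head ?_ (ih _ hsb b rfl hgb)
        exact Or.inl ⟨r, s, hrs, hle, hb⟩
      rcases le_total (a j) (a i) with hle | hle
      · exact key i j hij hi hj hle
      · exact key j i (Ne.symm hij) hj hi hle
    · push_neg at htwo
      have hexi : ∃ i, a i ≠ 0 := by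
        by_contra h
        push_neg at h
        have : Finset.univ.gcd a = 0 := by
          apply Finset.gcd_eq_zero_iff.mpr
          intro i _; exact h i
        omega
      obtain ⟨i, hi⟩ := hexi
      have hzero : ∀ j, j ≠ i → a j = 0 := by
        intro j hji
        by_contra h
        exact hi (htwo j i hji h)
      have hone : a i = 1 := by
        have h1 : Finset.univ.gcd a ∣ a i := Finset.gcd_dvd (Finset.mem_univ i)
        have h2 : a i ∣ Finset.univ.gcd a := by
          apply Finset.dvd_gcd
          intro j _
          by_cases hji : j = i
          · subst hji; exact dvd_rfl
          · rw [hzero j hji]; exact dvd_zero _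
        have := Nat.dvd_antisymm h1 h2
        omega
      apply Relation.ReflTransGen.single
      right
      refine ⟨Equiv.swap 0 i, ?_⟩
      funext j
      simp only [Function.comp_apply]
      by_cases hj0 : j = 0
      · subst hj0
        simp [Equiv.swap_apply_left, hone]
      · have hjv : (j : ℕ) ≠ 0 := by
          intro h
          exact hj0 (Fin.ext (by simp [h]))
        rw [if_neg hjv]
        by_cases hji : j = i
        · rw [hji, Equiv.swap_apply_right]
          have h0i : (0 : Fin k) ≠ i := fun h => hj0 (hji.trans h.symm)
          exact (hzero 0 h0i).symm
        · rw [Equiv.swap_apply_of_ne_of_ne hj0 hji]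
          exact (hzero j hji).symm

/-- Let `k ≥ 1` and let `a : Fin k → ℕ` be a vector of
nonnegative integers with `gcd (a₁,…,a_k) = 1`.  Then `a` can be transformed into
the vector `(1, 0, …, 0)` by a finite sequence of moves, each of which either
subtracts one entry from a (not smaller) other entry, or permutes the entries. -/
theorem reachable_unit_vector_of_gcd_eq_one (k : ℕ) (hk : 1 ≤ k) (a : Fin k → ℕ)
    (hgcd : Finset.univ.gcd a = 1) :
    Relation.ReflTransGen (fun v v' => SubtractMove v v' ∨ PermMove v v') a
      (fun j => if (j : ℕ) = 0 then 1 else 0) := by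
  exact aux_reach k hk (∑ i, a i) a rfl hgcd
end
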